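/- Define F_{B_n}(x,y) = Σ_{k,ℓ ≥ 0, k+ℓ ≤ n} C(n, k+ℓ) * C(n+k-1, n-1) * x^k y^ℓ as a polynomial in ℚ[x,y], for n ≥ 1. Then F_{B_n}(x,y) = (-1)^n * F_{B_n}(-1-x, -1-y). -/

import Mathlib

open Finset

lemma sum_shift (f : ℕ → ℚ) (a s : ℕ) (h : ∀ j < a, f j = 0) :
    ∑ j ∈ range (a + s), f j = ∑ i ∈ range s, f (a + i) := by
  induction s with
  | zero => simpa using Finset.sum_eq_zero (fun j hj => h j (mem_range.mp hj))
  | succ s ih => rw [← Nat.add_assoc, sum_range_succ, sum_range_succ, ih]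

lemma alt' (m N : ℕ) (hm : 1 ≤ m) (hN : m < N) :
    ∑ i ∈ range N, (-1:ℚ)^i * m.choose i = 0 := by
  have h1 : ∑ i ∈ range N, (-1:ℚ)^i * m.choose i
      = ∑ i ∈ range (m+1), (-1:ℚ)^i * m.choose i := by
    refine (Finset.sum_subset (range_subset_range.mpr hN) ?_).symm
    intro i _ hi
    have : m < i := by simpa using hi
    simp [Nat.choose_eq_zero_of_lt this]
  have h2 := Int.alternating_sum_range_choose (n := m)
  rw [if_neg (by omega : m ≠ 0)] at h2
  rw [h1]
  exact_mod_cast congrArg (fun z : ℤ => (z : ℚ)) h2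

lemma A0 (M b N : ℕ) (hb : b < M) (hN : M < N) :
    ∑ ℓ ∈ range N, (-1:ℚ)^ℓ * M.choose ℓ * ℓ.choose b = 0 := by
  have hbN : b ≤ N := by omega
  have h1 : ∑ ℓ ∈ range N, (-1:ℚ)^ℓ * M.choose ℓ * ℓ.choose b
      = ∑ i ∈ range (N - b), (-1:ℚ)^(b+i) * M.choose (b+i) * (b+i).choose b := by
    rw [← sum_shift (fun ℓ => (-1:ℚ)^ℓ * M.choose ℓ * ℓ.choose b) b (N - b)
      (by intro j hj; simp [Nat.choose_eq_zero_of_lt hj])]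
    have hb' : b + (N - b) = N := by omega
    rw [hb']
  rw [h1]
  have h2 : ∀ i : ℕ, (M.choose (b+i) * (b+i).choose b : ℚ)
      = (M.choose b : ℚ) * ((M-b).choose i) := by
    intro i
    by_cases hi : b + i ≤ M
    · have := Nat.choose_mul (n := M) (k := b+i) (s := b) (Nat.le_add_right b i)
      have h3 : (b+i) - b = i := by omega
      rw [h3] at this
      exact_mod_cast this
    · have hMb : M - b < i := by omega
      rw [Nat.choose_eq_zero_of_lt (by omega : M < b + i), Nat.choose_eq_zero_of_lt hMb]
      push_cast; ring
  calc ∑ i ∈ range (N - b), (-1:ℚ)^(b+i) * M.choose (b+i) * (b+i).choose b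
      = (-1:ℚ)^b * M.choose b * ∑ i ∈ range (N - b), (-1:ℚ)^i * (M-b).choose i := by
        rw [mul_sum]
        refine Finset.sum_congr rfl fun i _ => ?_
        rw [pow_add, mul_assoc, h2 i]; ring
    _ = 0 := by
        rw [alt' (M-b) (N-b) (by omega) (by omega)]; ring

lemma lemC (M : ℕ) : ∀ c d : ℕ,
    ∑ i ∈ range (M+1), (-1:ℚ)^i * (M.choose i) * ((c+i).choose (M+d))
      = (-1:ℚ)^M * c.choose d := by
  induction M with
  | zero => intro c d; simp
  | succ M ih =>
    intro c d
    rw [sum_range_succ']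
    have e1 : ∀ i : ℕ, (-1:ℚ)^(i+1) * ((M+1).choose (i+1)) * ((c+(i+1)).choose (M+1+d))
        = -((-1:ℚ)^i * (M.choose i) * (((c+1)+i).choose (M+(d+1))))
          + ((-1:ℚ)^(i+1) * (M.choose (i+1)) * ((c+(i+1)).choose (M+1+d))) := by
      intro i
      rw [Nat.choose_succ_succ M i]
      have h1 : c + (i+1) = (c+1) + i := by ring
      have h2 : M + 1 + d = M + (d+1) := by ring
      rw [h1, h2]
      push_cast
      ring
    rw [Finset.sum_congr rfl (fun i _ => e1 i), Finset.sum_add_distrib, Finset.sum_neg_distrib,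
      ih (c+1) (d+1)]
    -- second sum: shift back
    have e2 : ∑ i ∈ range (M+1), (-1:ℚ)^(i+1) * (M.choose (i+1)) * ((c+(i+1)).choose (M+1+d))
        = (∑ j ∈ range (M+2), (-1:ℚ)^j * (M.choose j) * ((c+j).choose (M+1+d)))
          - (-1:ℚ)^0 * (M.choose 0) * ((c+0).choose (M+1+d)) := by
      rw [sum_range_succ' (fun j => (-1:ℚ)^j * (M.choose j) * ((c+j).choose (M+1+d))) (M+1)]
      ring
    rw [e2]
    have e3 : ∑ j ∈ range (M+2), (-1:ℚ)^j * (M.choose j) * ((c+j).choose (M+1+d))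
        = (-1:ℚ)^M * c.choose (d+1) := by
      rw [sum_range_succ]
      have h2 : M + 1 + d = M + (d+1) := by ring
      rw [Nat.choose_succ_self M, h2, ih c (d+1)]
      push_cast; ring
    rw [e3]
    have e4 : (c+1).choose (d+1) = c.choose d + c.choose (d+1) := Nat.choose_succ_succ' c d
    have e5 : ((c+1).choose (d+1) : ℚ) = c.choose d + c.choose (d+1) := by exact_mod_cast e4
    rw [e5]
    simp only [Nat.choose_zero_right, Nat.cast_one]
    ring

lemma Wlem (m e a : ℕ) :
    ∑ j ∈ range (m+1), (-1:ℚ)^j * ((m+e+1+j).choose (m+e)) * m.choose j * j.choose a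
      = (-1:ℚ)^m * m.choose a * ((m+e+1+a).choose (a+e)) := by
  by_cases ha : a ≤ m
  · obtain ⟨t, rfl⟩ : ∃ t, m = a + t := ⟨m - a, by omega⟩
    have hsh : ∑ j ∈ range (a+t+1), (-1:ℚ)^j * ((a+t+e+1+j).choose (a+t+e)) * (a+t).choose j * j.choose a
        = ∑ i ∈ range (t+1), (-1:ℚ)^(a+i) * ((a+t+e+1+(a+i)).choose (a+t+e)) * (a+t).choose (a+i) * (a+i).choose a := by
      have := sum_shift (fun j => (-1:ℚ)^j * ((a+t+e+1+j).choose (a+t+e)) * (a+t).choose j * j.choose a) a (t+1)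
        (by intro j hj; simp [Nat.choose_eq_zero_of_lt hj])
      rw [← this]
      have h1 : a + (t+1) = a + t + 1 := by ring
      rw [h1]
    rw [hsh]
    have htri : ∀ i : ℕ, i ≤ t → ((a+t).choose (a+i) * (a+i).choose a : ℚ)
        = ((a+t).choose a : ℚ) * (t.choose i) := by
      intro i hi
      have := Nat.choose_mul (n := a+t) (k := a+i) (s := a) (by omega)
      have h2 : a + i - a = i := by omega
      have h3 : a + t - a = t := by omega
      rw [h2, h3] at this
      exact_mod_cast this
    have hC := lemC t (a+t+e+1+a) (a+e)
    have h4 : t + (a+e) = a+t+e := by ring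
    rw [h4] at hC
    calc ∑ i ∈ range (t+1), (-1:ℚ)^(a+i) * ((a+t+e+1+(a+i)).choose (a+t+e)) * (a+t).choose (a+i) * (a+i).choose a
        = (-1:ℚ)^a * ((a+t).choose a) * ∑ i ∈ range (t+1), (-1:ℚ)^i * (t.choose i) * (((a+t+e+1+a)+i).choose (a+t+e)) := by
          rw [mul_sum]
          refine Finset.sum_congr rfl fun i hi => ?_
          have hit : i ≤ t := by have := mem_range.mp hi; omega
          have h5 : a+t+e+1+(a+i) = (a+t+e+1+a)+i := by ring
          rw [h5, pow_add]
          have h6 := htri i hit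
          linear_combination ((-1:ℚ)^a * (-1:ℚ)^i * ((((a+t+e+1+a)+i).choose (a+t+e) : ℕ) : ℚ)) * h6
      _ = (-1:ℚ)^(a+t) * ((a+t).choose a) * ((a+t+e+1+a).choose (a+e)) := by
          rw [hC, pow_add]; ring
  · have h0 : ∀ j ∈ range (m+1), (-1:ℚ)^j * ((m+e+1+j).choose (m+e)) * m.choose j * j.choose a = 0 := by
      intro j hj
      have hja : j < a := by have := mem_range.mp hj; omega
      simp [Nat.choose_eq_zero_of_lt hja]
    rw [Finset.sum_eq_zero h0, Nat.choose_eq_zero_of_lt (by omega : m < a)]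
    simp

lemma Dlem (m e a' : ℕ) :
    ((m.choose a' : ℕ) : ℚ) * ((m+e+1+a').choose (a'+e))
      + (m.choose (a'+1)) * ((m+e+1+(a'+1)).choose ((a'+1)+e))
    = ((m+e+a'+1).choose (m+e)) * ((m+e+1).choose (a'+1+e)) := by
  have g1 : m+e+1+a' = m+e+a'+1 := by ring
  have g2 : a'+e = e+a' := by ring
  have g3 : m+e+1+(a'+1) = m+e+a'+2 := by ring
  have g4 : (a'+1)+e = e+a'+1 := by ring
  rw [g1, g3, g4, g2]
  rcases lt_trichotomy a' m with h | rfl | h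
  · obtain ⟨t, ht⟩ : ∃ t, m = a' + 1 + t := ⟨m - a' - 1, by omega⟩
    have h1 : m.choose (a'+1) * (a'+1) = m.choose a' * (t+1) := by
      have := Nat.choose_succ_right_eq m a'
      have h' : m - a' = t + 1 := by omega
      rwa [h'] at this
    have h2 : (m+e+a'+2) * (m+e+a'+1).choose (e+a') = (m+e+a'+2).choose (e+a'+1) * (e+a'+1) :=
      Nat.add_one_mul_choose_eq (m+e+a'+1) (e+a')
    have h3 : (m+e+1) * (m+e).choose (e+a') = (m+e+1).choose (e+a'+1) * (e+a'+1) :=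
      Nat.add_one_mul_choose_eq (m+e) (e+a')
    have h4 : (m+1) * m.choose a' = (m+1).choose (a'+1) * (a'+1) :=
      Nat.add_one_mul_choose_eq m a'
    have h5 : (m+e+a'+1).choose (m+e) * (m+e).choose (e+a')
        = (m+e+a'+1).choose (e+a') * (m+1).choose (a'+1) := by
      have h0 := Nat.choose_mul (n := m+e+a'+1) (k := m+e) (s := e+a') (by omega)
      have e1 : m+e+a'+1 - (e+a') = m+1 := by omega
      have e2 : m+e - (e+a') = t+1 := by omega
      rw [e1, e2] at h0
      rwa [← Nat.choose_symm_of_eq_add (show m+1 = (a'+1)+(t+1) by omega)] at h0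
    have q1 : (m.choose (a'+1) : ℚ) * (a'+1) = (m.choose a' : ℚ) * (t+1) := by exact_mod_cast h1
    have q2 : ((m+e+a'+2 : ℕ) : ℚ) * ((m+e+a'+1).choose (e+a'))
        = ((m+e+a'+2).choose (e+a'+1) : ℚ) * (e+a'+1) := by exact_mod_cast h2
    have q3 : ((m+e+1 : ℕ) : ℚ) * ((m+e).choose (e+a'))
        = ((m+e+1).choose (e+a'+1) : ℚ) * (e+a'+1) := by exact_mod_cast h3
    have q4 : ((m+1 : ℕ) : ℚ) * (m.choose a')
        = ((m+1).choose (a'+1) : ℚ) * (a'+1) := by exact_mod_cast h4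
    have q5 : ((m+e+a'+1).choose (m+e) : ℚ) * ((m+e).choose (e+a'))
        = ((m+e+a'+1).choose (e+a') : ℚ) * ((m+1).choose (a'+1)) := by exact_mod_cast h5
    have hne : ((a'+1 : ℚ)) * ((e:ℚ)+a'+1) ≠ 0 := by positivity
    apply mul_left_cancel₀ hne
    have qm : ((m:ℕ) : ℚ) = (a' : ℚ) + 1 + (t : ℚ) := by exact_mod_cast ht
    push_cast at q1 q2 q3 q4 q5 ⊢
    linear_combination
      (- ((m:ℚ) + (a':ℚ) + (e:ℚ) + 2) * ((m.choose a' : ℕ) : ℚ)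
        * (((m+e+a'+1).choose (e+a') : ℕ) : ℚ)) * qm + (((e:ℚ)+a'+1) * ((m+e+a'+2).choose (e+a'+1) : ℚ)) * q1
      - (((t:ℚ)+1) * (m.choose a' : ℚ)) * q2
      + (((a':ℚ)+1) * ((m+e+a'+1).choose (m+e) : ℚ)) * q3
      + (((m:ℚ)+e+1) * ((m+e+a'+1).choose (e+a') : ℚ)) * q4
      - (((m:ℚ)+e+1) * ((a':ℚ)+1)) * q5
  · simp only [Nat.choose_self, Nat.choose_succ_self]
    rw [show (a'+e+1).choose (e+a'+1) = 1 from by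
          rw [show e+a'+1 = a'+e+1 by ring, Nat.choose_self],
        show e+a' = a'+e from by ring]
    push_cast
    ring
  · have e1 : m.choose a' = 0 := Nat.choose_eq_zero_of_lt h
    have e2 : m.choose (a'+1) = 0 := Nat.choose_eq_zero_of_lt (by omega)
    have e3 : (m+e+1).choose (e+a'+1) = 0 := Nat.choose_eq_zero_of_lt (by omega)
    rw [e1, e2, e3]
    push_cast
    ring

lemma Blem (m e a : ℕ) :
    ∑ j ∈ range (m+1), (-1:ℚ)^j * ((m+e+1+j).choose (m+e)) * m.choose j * ((j+1).choose a)
      = (-1:ℚ)^m * ((m+e+a).choose (m+e)) * ((m+e+1).choose (a+e)) := by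
  cases a with
  | zero =>
    have h := Wlem m e 0
    simp only [Nat.choose_zero_right, Nat.cast_one, mul_one] at h ⊢
    rw [show m+e+0 = m+e by ring, Nat.choose_self]
    rw [show (0:ℕ)+e = e by ring] at h ⊢
    rw [show m+e+1+0 = m+e+1 by ring] at h
    rw [h]
    push_cast; ring
  | succ a' =>
    have split : ∀ j : ℕ, (((j+1).choose (a'+1) : ℕ) : ℚ) = (j.choose a') + (j.choose (a'+1)) := by
      intro j
      exact_mod_cast Nat.choose_succ_succ' j a'
    have e1 : ∑ j ∈ range (m+1), (-1:ℚ)^j * ((m+e+1+j).choose (m+e)) * m.choose j * ((j+1).choose (a'+1))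
        = (∑ j ∈ range (m+1), (-1:ℚ)^j * ((m+e+1+j).choose (m+e)) * m.choose j * (j.choose a'))
          + ∑ j ∈ range (m+1), (-1:ℚ)^j * ((m+e+1+j).choose (m+e)) * m.choose j * (j.choose (a'+1)) := by
      rw [← Finset.sum_add_distrib]
      refine Finset.sum_congr rfl fun j _ => ?_
      rw [split j]; ring
    rw [e1, Wlem m e a', Wlem m e (a'+1)]
    have hD := Dlem m e a'
    have g1 : m+e+(a'+1) = m+e+a'+1 := by ring
    rw [g1]
    linear_combination ((-1:ℚ)^m) * hD

lemma Alem (b : ℕ) : ∀ c k : ℕ,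
    ∑ ℓ ∈ range (b+c+2), (-1:ℚ)^ℓ * ((b+c+1).choose (k+1+ℓ)) * (ℓ.choose b)
      = (-1:ℚ)^b * c.choose k := by
  intro c
  induction c with
  | zero =>
    intro k
    rw [show b+0+2 = b+2 by ring, show b+0+1 = b+1 by ring]
    rw [Finset.sum_eq_single b ?h0 ?h1]
    · have hv : (((b+1).choose (k+1+b) : ℕ) : ℚ) = ((Nat.choose 0 k : ℕ) : ℚ) := by
        cases k with
        | zero => rw [show 0+1+b = b+1 by ring]; simp
        | succ k' =>
          rw [Nat.choose_eq_zero_of_lt (by omega : b+1 < k'+1+1+b),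
              Nat.choose_eq_zero_of_lt (by omega : 0 < k'+1)]
      rw [hv, Nat.choose_self]
      push_cast; ring
    case h0 =>
      intro ℓ hl hne
      have hl' : ℓ < b + 2 := mem_range.mp hl
      rcases lt_trichotomy ℓ b with h | h | h
      · simp [Nat.choose_eq_zero_of_lt h]
      · exact absurd h hne
      · have : ℓ = b + 1 := by omega
        subst this
        rw [Nat.choose_eq_zero_of_lt (by omega : b+1 < k+1+(b+1))]
        push_cast; ring
    case h1 =>
      intro hb
      exact absurd (mem_range.mpr (by omega)) hb
  | succ c ih =>
    intro k
    rw [show b+(c+1)+2 = b+c+3 by ring, show b+(c+1)+1 = b+c+2 by ring]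
    have pascal : ∀ ℓ : ℕ, (((b+c+2).choose (k+1+ℓ) : ℕ) : ℚ)
        = ((b+c+1).choose (k+ℓ)) + ((b+c+1).choose (k+1+ℓ)) := by
      intro ℓ
      have := Nat.choose_succ_succ' (b+c+1) (k+ℓ)
      rw [show k+ℓ+1 = k+1+ℓ by ring] at this
      exact_mod_cast this
    have split : ∑ ℓ ∈ range (b+c+3), (-1:ℚ)^ℓ * ((b+c+2).choose (k+1+ℓ)) * (ℓ.choose b)
        = (∑ ℓ ∈ range (b+c+3), (-1:ℚ)^ℓ * ((b+c+1).choose (k+ℓ)) * (ℓ.choose b))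
          + ∑ ℓ ∈ range (b+c+3), (-1:ℚ)^ℓ * ((b+c+1).choose (k+1+ℓ)) * (ℓ.choose b) := by
      rw [← Finset.sum_add_distrib]
      refine Finset.sum_congr rfl fun ℓ _ => ?_
      rw [pascal ℓ]; ring
    have hS2 : ∑ ℓ ∈ range (b+c+3), (-1:ℚ)^ℓ * ((b+c+1).choose (k+1+ℓ)) * (ℓ.choose b)
        = (-1:ℚ)^b * c.choose k := by
      rw [show b+c+3 = (b+c+2)+1 by ring, sum_range_succ,
          Nat.choose_eq_zero_of_lt (by omega : b+c+1 < k+1+(b+c+2))]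
      rw [show b+c+2 = b+c+2 by rfl]
      simpa using ih k
    rw [split, hS2]
    cases k with
    | zero =>
      have hS1 : ∑ ℓ ∈ range (b+c+3), (-1:ℚ)^ℓ * ((b+c+1).choose (0+ℓ)) * (ℓ.choose b)
          = 0 := by
        have := A0 (b+c+1) b (b+c+3) (by omega) (by omega)
        rw [← this]
        refine Finset.sum_congr rfl fun ℓ _ => ?_
        rw [show 0+ℓ = ℓ by ring]
      rw [hS1]
      simp
    | succ k' =>
      have hS1 : ∑ ℓ ∈ range (b+c+3), (-1:ℚ)^ℓ * ((b+c+1).choose (k'+1+ℓ)) * (ℓ.choose b)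
          = (-1:ℚ)^b * c.choose k' := by
        rw [show b+c+3 = (b+c+2)+1 by ring, sum_range_succ,
            Nat.choose_eq_zero_of_lt (by omega : b+c+1 < k'+1+(b+c+2))]
        simpa using ih k'
      rw [hS1]
      have : ((c+1).choose (k'+1) : ℚ) = (c.choose k') + (c.choose (k'+1)) := by
        exact_mod_cast Nat.choose_succ_succ' c k'
      rw [this]
      ring

lemma key (n a b : ℕ) (hn : 1 ≤ n) (hb : b ≤ n) :
    (-1:ℚ)^n * ∑ k ∈ range (n+1), (-1:ℚ)^k * ((n+k-1).choose (n-1)) * (k.choose a) *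
        (∑ ℓ ∈ range (n+1), (-1:ℚ)^ℓ * (n.choose (k+ℓ)) * (ℓ.choose b))
      = (n.choose (a+b)) * ((n+a-1).choose (n-1)) := by
  rcases eq_or_lt_of_le hb with heq | hbn
  · -- b = n case
    subst heq
    have inner : ∀ k : ℕ, (∑ ℓ ∈ range (b+1), (-1:ℚ)^ℓ * (b.choose (k+ℓ)) * (ℓ.choose b))
        = (-1:ℚ)^b * (b.choose (k+b)) := by
      intro k
      rw [Finset.sum_eq_single b]
      · simp
      · intro ℓ hl hne
        have : ℓ < b := by have := mem_range.mp hl; omega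
        simp [Nat.choose_eq_zero_of_lt this]
      · intro h; exact absurd (mem_range.mpr (by omega)) h
    have hsum : ∑ k ∈ range (b+1), (-1:ℚ)^k * ((b+k-1).choose (b-1)) * (k.choose a) *
        (∑ ℓ ∈ range (b+1), (-1:ℚ)^ℓ * (b.choose (k+ℓ)) * (ℓ.choose b))
        = ∑ k ∈ range (b+1), (-1:ℚ)^k * ((b+k-1).choose (b-1)) * (k.choose a) *
          ((-1:ℚ)^b * (b.choose (k+b))) := by
      refine Finset.sum_congr rfl fun k _ => ?_
      rw [inner k]
    rw [hsum, Finset.sum_eq_single 0]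
    · rw [show b+0-1 = b-1 by omega, Nat.zero_add, Nat.choose_self _]
      have hsq : (-1:ℚ)^b * (-1:ℚ)^b = 1 := by
        rw [← pow_add]; exact Even.neg_one_pow ⟨b, by ring⟩
      cases a with
      | zero =>
        simp only [Nat.zero_add, Nat.choose_self, Nat.choose_zero_right, Nat.cast_one]
        rw [show b+0-1 = b-1 by omega, Nat.choose_self (b-1)]
        push_cast
        linear_combination hsq
      | succ a' =>
        rw [Nat.choose_eq_zero_of_lt (by omega : b < a'+1+b),
            Nat.choose_eq_zero_of_lt (by omega : 0 < a'+1)]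
        push_cast; ring
    · intro k hk hne
      rw [Nat.choose_eq_zero_of_lt (by omega : b < k+b)]
      push_cast; ring
    · intro h; exact absurd (mem_range.mpr (by omega)) h
  · -- b < n case
    obtain ⟨c, rfl⟩ : ∃ c, n = b+c+1 := ⟨n-b-1, by omega⟩
    rw [sum_range_succ']
    -- the k = 0 term vanishes
    have hF0 : (-1:ℚ)^0 * (((b+c+1)+0-1).choose ((b+c+1)-1)) * (Nat.choose 0 a) *
        (∑ ℓ ∈ range ((b+c+1)+1), (-1:ℚ)^ℓ * ((b+c+1).choose (0+ℓ)) * (ℓ.choose b)) = 0 := by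
      have h0 : ∑ ℓ ∈ range ((b+c+1)+1), (-1:ℚ)^ℓ * ((b+c+1).choose (0+ℓ)) * (ℓ.choose b) = 0 := by
        have hA0 := A0 (b+c+1) b ((b+c+1)+1) (by omega) (by omega)
        rw [← hA0]
        exact Finset.sum_congr rfl fun ℓ _ => by rw [Nat.zero_add]
      rw [h0]; ring
    rw [hF0, add_zero]
    -- evaluate inner sums via Alem
    have hin : ∀ j : ℕ, (-1:ℚ)^(j+1) * (((b+c+1)+(j+1)-1).choose ((b+c+1)-1)) * ((j+1).choose a) *
        (∑ ℓ ∈ range ((b+c+1)+1), (-1:ℚ)^ℓ * ((b+c+1).choose ((j+1)+ℓ)) * (ℓ.choose b))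
        = (-1:ℚ)^(j+1) * (-1:ℚ)^b * (((c+b+1+j)).choose (c+b)) * ((j+1).choose a) * (c.choose j) := by
      intro j
      have hA : ∑ ℓ ∈ range ((b+c+1)+1), (-1:ℚ)^ℓ * ((b+c+1).choose ((j+1)+ℓ)) * (ℓ.choose b)
          = (-1:ℚ)^b * c.choose j := by
        have hAl := Alem b c j
        rw [show b+c+2 = (b+c+1)+1 by ring] at hAl
        rw [← hAl]
      rw [hA]
      rw [show (b+c+1)+(j+1)-1 = c+b+1+j by omega, show (b+c+1)-1 = c+b by omega]
      ring
    rw [Finset.sum_congr rfl (fun j (_ : j ∈ range (b+c+1)) => hin j)]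
    -- pull out constants and shrink the range
    have hout : ∑ j ∈ range (b+c+1), (-1:ℚ)^(j+1) * (-1:ℚ)^b * (((c+b+1+j)).choose (c+b)) * ((j+1).choose a) * (c.choose j)
        = (-1:ℚ)^(b+1) * ∑ j ∈ range (c+1), (-1:ℚ)^j * ((c+b+1+j).choose (c+b)) * (c.choose j) * ((j+1).choose a) := by
      rw [mul_sum]
      rw [← Finset.sum_subset (Finset.range_subset_range.mpr (by omega : c+1 ≤ b+c+1))]
      · exact Finset.sum_congr rfl fun j _ => by rw [pow_succ, pow_add]; ring
      · intro j _ hj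
        have : c < j := by simpa using hj
        simp [Nat.choose_eq_zero_of_lt this]
    rw [hout, Blem c b a]
    rw [show c+b+a = (b+c+1)+a-1 by omega, show c+b+1 = b+c+1 by omega,
        show c+b = (b+c+1)-1 by omega]
    have hsgn : (-1:ℚ)^(b+c+1) * ((-1:ℚ)^(b+1) * (-1:ℚ)^c) = 1 := by
      rw [← pow_add, ← pow_add]
      exact Even.neg_one_pow ⟨b+c+1, by ring⟩
    linear_combination (((((b+c+1)+a-1).choose ((b+c+1)-1) : ℕ) : ℚ)
      * (((b+c+1).choose (a+b) : ℕ) : ℚ)) * hsgn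

lemma swap4 (s : Finset ℕ) (f : ℕ → ℕ → ℕ → ℕ → ℚ) :
    ∑ k ∈ s, ∑ ℓ ∈ s, ∑ a ∈ s, ∑ b ∈ s, f k ℓ a b
      = ∑ a ∈ s, ∑ b ∈ s, ∑ k ∈ s, ∑ ℓ ∈ s, f k ℓ a b := by
  calc ∑ k ∈ s, ∑ ℓ ∈ s, ∑ a ∈ s, ∑ b ∈ s, f k ℓ a b
      = ∑ k ∈ s, ∑ a ∈ s, ∑ ℓ ∈ s, ∑ b ∈ s, f k ℓ a b :=
        Finset.sum_congr rfl fun k _ => Finset.sum_comm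
    _ = ∑ a ∈ s, ∑ k ∈ s, ∑ ℓ ∈ s, ∑ b ∈ s, f k ℓ a b := Finset.sum_comm
    _ = ∑ a ∈ s, ∑ k ∈ s, ∑ b ∈ s, ∑ ℓ ∈ s, f k ℓ a b :=
        Finset.sum_congr rfl fun a _ => Finset.sum_congr rfl fun k _ => Finset.sum_comm
    _ = ∑ a ∈ s, ∑ b ∈ s, ∑ k ∈ s, ∑ ℓ ∈ s, f k ℓ a b :=
        Finset.sum_congr rfl fun a _ => Finset.sum_comm

lemma extend (n : ℕ) (u v : ℚ) :
    (∑ k ∈ range (n+1), ∑ ℓ ∈ range (n+1-k),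
        (n.choose (k+ℓ) : ℚ) * ((n+k-1).choose (n-1)) * u^k * v^ℓ)
    = ∑ k ∈ range (n+1), ∑ ℓ ∈ range (n+1),
        (n.choose (k+ℓ) : ℚ) * ((n+k-1).choose (n-1)) * u^k * v^ℓ := by
  refine Finset.sum_congr rfl fun k hk => ?_
  refine Finset.sum_subset (Finset.range_subset_range.mpr (by omega)) ?_
  intro ℓ hl2 hl
  have hk' : k ≤ n := by have := mem_range.mp hk; omega
  have h1 : ¬ ℓ < n+1-k := by simpa using hl
  rw [Nat.choose_eq_zero_of_lt (by omega : n < k + ℓ)]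
  push_cast; ring

lemma binom (n k : ℕ) (hk : k ≤ n) (x : ℚ) :
    (-1 - x)^k = (-1:ℚ)^k * ∑ a ∈ range (n+1), (k.choose a : ℚ) * x^a := by
  have h1 : (-1 - x : ℚ) = -(x + 1) := by ring
  rw [h1, neg_pow]
  congr 1
  rw [add_pow]
  rw [Finset.sum_subset (Finset.range_subset_range.mpr (by omega : k+1 ≤ n+1))]
  · exact Finset.sum_congr rfl fun a _ => by rw [one_pow]; ring
  · intro a _ ha
    have : k < a := by simpa using ha
    simp [Nat.choose_eq_zero_of_lt this]

/-- Refined Dehn–Sommerville symmetry `F(x,y) = (-1)^n F(-1-x,-1-y)` for the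
explicit type `B_n` F-triangle. -/
theorem F_triangle_B_symmetry (n : ℕ) (hn : 1 ≤ n) (x y : ℚ) :
    ∑ k ∈ range (n + 1), ∑ ℓ ∈ range (n + 1 - k),
        ((Nat.choose n (k + ℓ) : ℚ)) * (Nat.choose (n + k - 1) (n - 1)) * x ^ k * y ^ ℓ =
      (-1) ^ n *
        ∑ k ∈ range (n + 1), ∑ ℓ ∈ range (n + 1 - k),
          ((Nat.choose n (k + ℓ) : ℚ)) * (Nat.choose (n + k - 1) (n - 1)) *
            (-1 - x) ^ k * (-1 - y) ^ ℓ := by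
  rw [extend n x y, extend n (-1-x) (-1-y)]
  -- expand the binomials and rearrange
  have hT : ∑ k ∈ range (n+1), ∑ ℓ ∈ range (n+1),
        (n.choose (k+ℓ) : ℚ) * ((n+k-1).choose (n-1)) * (-1-x)^k * (-1-y)^ℓ
      = ∑ a ∈ range (n+1), ∑ b ∈ range (n+1),
          (∑ k ∈ range (n+1), (-1:ℚ)^k * ((n+k-1).choose (n-1)) * (k.choose a) *
            (∑ ℓ ∈ range (n+1), (-1:ℚ)^ℓ * (n.choose (k+ℓ)) * (ℓ.choose b))) * (x^a * y^b) := by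
    have h1 : ∑ k ∈ range (n+1), ∑ ℓ ∈ range (n+1),
          (n.choose (k+ℓ) : ℚ) * ((n+k-1).choose (n-1)) * (-1-x)^k * (-1-y)^ℓ
        = ∑ k ∈ range (n+1), ∑ ℓ ∈ range (n+1), ∑ a ∈ range (n+1), ∑ b ∈ range (n+1),
            ((-1:ℚ)^k * ((n+k-1).choose (n-1)) * (k.choose a) *
              ((-1:ℚ)^ℓ * (n.choose (k+ℓ)) * (ℓ.choose b))) * (x^a * y^b) := by
      refine Finset.sum_congr rfl fun k hk => Finset.sum_congr rfl fun ℓ hl => ?_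
      rw [binom n k (by have := mem_range.mp hk; omega) x,
          binom n ℓ (by have := mem_range.mp hl; omega) y]
      rw [show (n.choose (k+ℓ) : ℚ) * ((n+k-1).choose (n-1)) *
            ((-1:ℚ)^k * ∑ a ∈ range (n+1), (k.choose a : ℚ) * x^a) *
            ((-1:ℚ)^ℓ * ∑ b ∈ range (n+1), (ℓ.choose b : ℚ) * y^b)
          = ((n.choose (k+ℓ) : ℚ) * ((n+k-1).choose (n-1)) * (-1:ℚ)^k * (-1:ℚ)^ℓ) *
            ((∑ a ∈ range (n+1), (k.choose a : ℚ) * x^a) *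
             (∑ b ∈ range (n+1), (ℓ.choose b : ℚ) * y^b)) from by ring]
      rw [Finset.sum_mul_sum, Finset.mul_sum]
      refine Finset.sum_congr rfl fun a _ => ?_
      rw [Finset.mul_sum]
      refine Finset.sum_congr rfl fun b _ => ?_
      ring
    rw [h1, swap4 (range (n+1)) (fun k ℓ a b =>
      ((-1:ℚ)^k * ((n+k-1).choose (n-1)) * (k.choose a) *
        ((-1:ℚ)^ℓ * (n.choose (k+ℓ)) * (ℓ.choose b))) * (x^a * y^b))]
    refine Finset.sum_congr rfl fun a _ => Finset.sum_congr rfl fun b _ => ?_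
    rw [Finset.sum_mul]
    refine Finset.sum_congr rfl fun k _ => ?_
    rw [Finset.mul_sum, Finset.sum_mul]
  rw [hT, Finset.mul_sum]
  have hkey : ∀ a ∈ range (n+1), (-1:ℚ)^n * ∑ b ∈ range (n+1),
        (∑ k ∈ range (n+1), (-1:ℚ)^k * ((n+k-1).choose (n-1)) * (k.choose a) *
          (∑ ℓ ∈ range (n+1), (-1:ℚ)^ℓ * (n.choose (k+ℓ)) * (ℓ.choose b))) * (x^a * y^b)
      = ∑ b ∈ range (n+1), ((n.choose (a+b) : ℚ) * ((n+a-1).choose (n-1))) * (x^a * y^b) := by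
    intro a _
    rw [Finset.mul_sum]
    refine Finset.sum_congr rfl fun b hb => ?_
    rw [show (-1:ℚ)^n * ((∑ k ∈ range (n+1), (-1:ℚ)^k * ((n+k-1).choose (n-1)) * (k.choose a) *
          (∑ ℓ ∈ range (n+1), (-1:ℚ)^ℓ * (n.choose (k+ℓ)) * (ℓ.choose b))) * (x^a * y^b))
        = ((-1:ℚ)^n * ∑ k ∈ range (n+1), (-1:ℚ)^k * ((n+k-1).choose (n-1)) * (k.choose a) *
          (∑ ℓ ∈ range (n+1), (-1:ℚ)^ℓ * (n.choose (k+ℓ)) * (ℓ.choose b))) * (x^a * y^b) from by ring]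
    rw [key n a b hn (by have := mem_range.mp hb; omega)]
  rw [Finset.sum_congr rfl hkey]
  refine Finset.sum_congr rfl fun a _ => Finset.sum_congr rfl fun b _ => ?_
  ring
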